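/- In the trust-region method, if additionally g ≠ 0, the minimizer p of the quadratic model m(p) = gᵀp + ½pᵀBp over the ball of radius R > 0 satisfies the Cauchy decrease bound: m(0) − m(p) ≥ ½‖g‖ · min(R, ‖g‖/‖B‖). -/

import Mathlib

open scoped RealInnerProductSpace

/-- Cauchy decrease bound: if `g ≠ 0`, `B` is symmetric with `‖B‖ > 0`, and `p`
is a global minimizer of `m(q) = ⟪g, q⟫ + ½⟪B q, q⟫` over the ball of radius
`R > 0`, then `m(0) − m(p) ≥ ½‖g‖ min(R, ‖g‖/‖B‖)`. -/
theorem trust_region_cauchy_decrease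
    {n : ℕ} (g : EuclideanSpace ℝ (Fin n)) (hg : g ≠ 0)
    (B : EuclideanSpace ℝ (Fin n) →L[ℝ] EuclideanSpace ℝ (Fin n))
    (hBsymm : ∀ u v, ⟪B u, v⟫ = ⟪u, B v⟫) (hB : 0 < ‖B‖)
    (R : ℝ) (hR : 0 < R) (p : EuclideanSpace ℝ (Fin n)) (hp : ‖p‖ ≤ R)
    (hmin : IsMinOn (fun q => ⟪g, q⟫ + (1 / 2) * ⟪B q, q⟫) {q | ‖q‖ ≤ R} p) :
    (1 / 2) * ‖g‖ * min R (‖g‖ / ‖B‖) ≤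
      (⟪g, (0 : EuclideanSpace ℝ (Fin n))⟫ +
          (1 / 2) * ⟪B 0, (0 : EuclideanSpace ℝ (Fin n))⟫) -
        (⟪g, p⟫ + (1 / 2) * ⟪B p, p⟫) := by
  set k := ‖g‖ with hkdef
  have hk0 : 0 < k := norm_pos_iff.mpr hg
  set a := ⟪B g, g⟫ with hadef
  have haB : a ≤ ‖B‖ * k ^ 2 := by
    calc a ≤ ‖B g‖ * ‖g‖ := real_inner_le_norm _ _
      _ ≤ (‖B‖ * ‖g‖) * ‖g‖ := by gcongr; exact B.le_opNorm g
      _ = ‖B‖ * k ^ 2 := by ring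
  have key : ∀ t : ℝ, 0 ≤ t → t * k ≤ R →
      ⟪g, p⟫ + (1 / 2) * ⟪B p, p⟫ ≤ -t * k ^ 2 + t ^ 2 / 2 * a := by
    intro t ht htR
    have hq : (-t) • g ∈ {q : EuclideanSpace ℝ (Fin n) | ‖q‖ ≤ R} := by
      simp only [Set.mem_setOf_eq, norm_smul, norm_neg, Real.norm_eq_abs,
        abs_of_nonneg ht]
      exact htR
    have h := hmin hq
    simp only [Set.mem_setOf_eq] at h
    calc ⟪g, p⟫ + (1 / 2) * ⟪B p, p⟫
        ≤ ⟪g, (-t) • g⟫ + (1 / 2) * ⟪B ((-t) • g), (-t) • g⟫ := h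
      _ = -t * k ^ 2 + t ^ 2 / 2 * a := by
          rw [map_smul, inner_smul_right, inner_smul_left, inner_smul_right,
            real_inner_self_eq_norm_sq]
          simp only [RCLike.conj_to_real]
          ring
  have hmin_le_R : min R (k / ‖B‖) ≤ R := min_le_left _ _
  have hmin_le_kB : min R (k / ‖B‖) ≤ k / ‖B‖ := min_le_right _ _
  have goal : ⟪g, p⟫ + (1 / 2) * ⟪B p, p⟫ ≤ -(1 / 2 * k * min R (k / ‖B‖)) := by
    rcases le_or_gt a 0 with hneg | hpos
    · have h := key (R / k) (by positivity) (by field_simp; norm_num)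
      have hRk : R ^ 2 / k ^ 2 ≥ 0 := by positivity
      have : -(R / k) * k ^ 2 + (R / k) ^ 2 / 2 * a ≤ -(R * k) := by
        have hRk2 : -(R / k) * k ^ 2 = -(R * k) := by field_simp
        nlinarith [sq_nonneg (R / k)]
      nlinarith
    · rcases le_or_gt (k ^ 3) (a * R) with hcase | hcase
      · have ht : (0:ℝ) ≤ k ^ 2 / a := by positivity
        have htR : (k ^ 2 / a) * k ≤ R := by
          rw [div_mul_eq_mul_div, div_le_iff₀ hpos]
          nlinarith
        have h := key (k ^ 2 / a) ht htR
        have hval : -(k ^ 2 / a) * k ^ 2 + (k ^ 2 / a) ^ 2 / 2 * a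
            = -(k ^ 4 / (2 * a)) := by field_simp; ring
        rw [hval] at h
        have hbound : -(k ^ 4 / (2 * a)) ≤ -(1 / 2 * k * (k / ‖B‖)) := by
          rw [neg_le_neg_iff]
          have heq : 1 / 2 * k * (k / ‖B‖) = k ^ 2 / (2 * ‖B‖) := by ring
          rw [heq, div_le_div_iff₀ (by positivity) (by positivity)]
          nlinarith [sq_nonneg k]
        have : -(1 / 2 * k * (k / ‖B‖)) ≤ -(1 / 2 * k * min R (k / ‖B‖)) := by
          nlinarith
        linarith
      · have h := key (R / k) (by positivity) (by field_simp; norm_num)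
        have hval : -(R / k) * k ^ 2 + (R / k) ^ 2 / 2 * a
            ≤ -(R * k / 2) := by
          have h1 : -(R / k) * k ^ 2 = -(R * k) := by field_simp
          have h2 : (R / k) ^ 2 / 2 * a ≤ R * k / 2 := by
            have heq : (R / k) ^ 2 / 2 * a = R ^ 2 * a / (2 * k ^ 2) := by
              field_simp
            rw [heq, div_le_div_iff₀ (by positivity) two_pos]
            nlinarith [mul_pos hR hR, hcase.le]
          linarith
        have : -(R * k / 2) ≤ -(1 / 2 * k * min R (k / ‖B‖)) := by nlinarith
        linarith
  simp only [inner_zero_right, map_zero, mul_zero, zero_add]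
  linarith
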